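/- Let H : ℝ^d → ℝ be convex and L-Lipschitz, and for λ ∈ (0,1] let H_λ be its Moreau–Yosida regularization. Let m₁, m₂ ≥ 0 with m₁, m₂ ≤ M, and p₁, p₂ ∈ ℝ^d, and b ∈ ∂H(p₁). Then m₂·(H_λ(p₂) - H(p₁) + ∇H_λ(p₂)·(p₁ - p₂)) + m₁·(H(p₁) - H_λ(p₂) + b·(p₂ - p₁)) ≤ M·L²·λ. -/

import Mathlib

open scoped RealInnerProductSpace

/-- Pointwise estimate underlying `‖m_k - m_{k,λ}‖ ≲ λ^{1/2}`: mixing the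
regularized and unregularized convexity residuals costs at most `M L² λ`. -/
theorem mixed_residual_bound (d : ℕ)
    (H : EuclideanSpace ℝ (Fin d) → ℝ) (L lam M : ℝ) (hL : 0 ≤ L)
    (hlam : lam ∈ Set.Ioc (0 : ℝ) 1)
    (hconv : ConvexOn ℝ Set.univ H)
    (hlip : ∀ p q, |H p - H q| ≤ L * ‖p - q‖)
    (Hlam : EuclideanSpace ℝ (Fin d) → ℝ)
    (hHlam : ∀ p, Hlam p = ⨅ q : EuclideanSpace ℝ (Fin d),
      (H q + ‖q - p‖ ^ 2 / (2 * lam)))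
    (gradHlam : EuclideanSpace ℝ (Fin d) → EuclideanSpace ℝ (Fin d))
    (hgrad : ∀ p, HasGradientAt Hlam (gradHlam p) p)
    (m₁ m₂ : ℝ) (hm₁ : m₁ ∈ Set.Icc (0 : ℝ) M) (hm₂ : m₂ ∈ Set.Icc (0 : ℝ) M)
    (p₁ p₂ b : EuclideanSpace ℝ (Fin d))
    (hb : ∀ q, H p₁ + ⟪b, q - p₁⟫ ≤ H q) :
    m₂ * (Hlam p₂ - H p₁ + ⟪gradHlam p₂, p₁ - p₂⟫)
      + m₁ * (H p₁ - Hlam p₂ + ⟪b, p₂ - p₁⟫) ≤ M * L ^ 2 * lam := by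
  obtain ⟨hlam0, hlam1⟩ := hlam
  -- uniform lower bound for the objective in the Moreau envelope
  have key : ∀ p q : EuclideanSpace ℝ (Fin d),
      H p - L ^ 2 * lam / 2 ≤ H q + ‖q - p‖ ^ 2 / (2 * lam) := by
    intro p q
    have h1 := (abs_le.mp (hlip p q)).2
    have h2 : ‖p - q‖ = ‖q - p‖ := norm_sub_rev p q
    have h4 : L * ‖q - p‖ ≤ ‖q - p‖ ^ 2 / (2 * lam) + L ^ 2 * lam / 2 := by
      rw [← sub_nonneg]
      have h5 : ‖q - p‖ ^ 2 / (2 * lam) + L ^ 2 * lam / 2 - L * ‖q - p‖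
          = (‖q - p‖ - L * lam) ^ 2 / (2 * lam) := by
        field_simp
        ring
      rw [h5]
      positivity
    linarith [h1, h2 ▸ h1]
  have bdd : ∀ p : EuclideanSpace ℝ (Fin d),
      BddBelow (Set.range fun q => H q + ‖q - p‖ ^ 2 / (2 * lam)) := by
    intro p
    exact ⟨H p - L ^ 2 * lam / 2, by rintro y ⟨q, rfl⟩; exact key p q⟩
  have hle : ∀ p, Hlam p ≤ H p := by
    intro p
    rw [hHlam p]
    have := ciInf_le (bdd p) p
    simpa using this
  have hge : ∀ p, H p - L ^ 2 * lam / 2 ≤ Hlam p := by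
    intro p
    rw [hHlam p]
    exact le_ciInf (key p)
  -- convexity of the Moreau envelope
  have hconvlam : ConvexOn ℝ Set.univ Hlam := by
    refine ⟨convex_univ, ?_⟩
    intro x _ y _ a c ha hc hac
    simp only [smul_eq_mul]
    rcases eq_or_lt_of_le ha with ha0 | ha0
    · have : c = 1 := by linarith
      simp [← ha0, this]
    rcases eq_or_lt_of_le hc with hc0 | hc0
    · have : a = 1 := by linarith
      simp [← hc0, this]
    have key2 : ∀ q₁ q₂ : EuclideanSpace ℝ (Fin d),
        Hlam (a • x + c • y) ≤ a * (H q₁ + ‖q₁ - x‖ ^ 2 / (2 * lam))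
          + c * (H q₂ + ‖q₂ - y‖ ^ 2 / (2 * lam)) := by
      intro q₁ q₂
      have h0 : Hlam (a • x + c • y) ≤ H (a • q₁ + c • q₂)
          + ‖(a • q₁ + c • q₂) - (a • x + c • y)‖ ^ 2 / (2 * lam) := by
        rw [hHlam (a • x + c • y)]
        exact ciInf_le (bdd _) (a • q₁ + c • q₂)
      have hH : H (a • q₁ + c • q₂) ≤ a * H q₁ + c * H q₂ := by
        have := hconv.2 (Set.mem_univ q₁) (Set.mem_univ q₂) ha hc hac
        simpa using this
      have hn1 : ‖(a • q₁ + c • q₂) - (a • x + c • y)‖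
          ≤ a * ‖q₁ - x‖ + c * ‖q₂ - y‖ := by
        have : (a • q₁ + c • q₂) - (a • x + c • y) = a • (q₁ - x) + c • (q₂ - y) := by
          module
        rw [this]
        calc ‖a • (q₁ - x) + c • (q₂ - y)‖ ≤ ‖a • (q₁ - x)‖ + ‖c • (q₂ - y)‖ :=
              norm_add_le _ _
          _ = a * ‖q₁ - x‖ + c * ‖q₂ - y‖ := by
              rw [norm_smul, norm_smul, Real.norm_eq_abs, Real.norm_eq_abs,
                abs_of_nonneg ha, abs_of_nonneg hc]
      have hn2 : ‖(a • q₁ + c • q₂) - (a • x + c • y)‖ ^ 2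
          ≤ a * ‖q₁ - x‖ ^ 2 + c * ‖q₂ - y‖ ^ 2 := by
        have h5 : ‖(a • q₁ + c • q₂) - (a • x + c • y)‖ ^ 2
            ≤ (a * ‖q₁ - x‖ + c * ‖q₂ - y‖) ^ 2 := by
          apply pow_le_pow_left₀ (norm_nonneg _) hn1
        nlinarith [sq_nonneg (‖q₁ - x‖ - ‖q₂ - y‖), mul_nonneg ha hc]
      have hn3 : ‖(a • q₁ + c • q₂) - (a • x + c • y)‖ ^ 2 / (2 * lam)
          ≤ a * (‖q₁ - x‖ ^ 2 / (2 * lam)) + c * (‖q₂ - y‖ ^ 2 / (2 * lam)) := by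
        rw [mul_div_assoc', mul_div_assoc', ← add_div]
        exact div_le_div_of_nonneg_right hn2 (by positivity) |>.trans_eq rfl
      linarith
    have h₁ : ∀ q₂ : EuclideanSpace ℝ (Fin d),
        Hlam (a • x + c • y) - c * (H q₂ + ‖q₂ - y‖ ^ 2 / (2 * lam)) ≤ a * Hlam x := by
      intro q₂
      rw [← div_le_iff₀' ha0]
      rw [hHlam x]
      apply le_ciInf
      intro q₁
      rw [div_le_iff₀ ha0]
      have := key2 q₁ q₂
      linarith
    have h₂ : Hlam (a • x + c • y) - a * Hlam x ≤ c * Hlam y := by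
      rw [← div_le_iff₀' hc0]
      rw [hHlam y]
      apply le_ciInf
      intro q₂
      rw [div_le_iff₀ hc0]
      have := h₁ q₂
      linarith
    linarith
  -- gradient inequality for the differentiable convex function Hlam
  have hgradineq : ∀ p q : EuclideanSpace ℝ (Fin d),
      Hlam p + ⟪gradHlam p, q - p⟫ ≤ Hlam q := by
    intro p q
    set v := q - p with hv
    have hline : ConvexOn ℝ Set.univ (fun t : ℝ => Hlam (p + t • v)) := by
      have := hconvlam.comp_affineMap
        (AffineMap.lineMap p q : ℝ →ᵃ[ℝ] EuclideanSpace ℝ (Fin d))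
      have heq : (Hlam ∘ (AffineMap.lineMap p q : ℝ →ᵃ[ℝ] EuclideanSpace ℝ (Fin d)))
          = fun t : ℝ => Hlam (p + t • v) := by
        funext t
        simp [AffineMap.lineMap_apply, hv, Function.comp]
        congr 1
        module
      rw [heq] at this
      simpa using this
    have hF : HasFDerivAt Hlam
        ((InnerProductSpace.toDual ℝ (EuclideanSpace ℝ (Fin d))) (gradHlam p)) p :=
      (hasGradientAt_iff_hasFDerivAt).mp (hgrad p)
    have hc : HasDerivAt (fun t : ℝ => p + t • v) v 0 := by
      simpa using ((hasDerivAt_id (0 : ℝ)).smul_const v).const_add p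
    have hderiv : HasDerivAt (fun t : ℝ => Hlam (p + t • v)) ⟪gradHlam p, v⟫ 0 := by
      have hF' : HasFDerivAt Hlam
          ((InnerProductSpace.toDual ℝ (EuclideanSpace ℝ (Fin d))) (gradHlam p))
          (p + (0 : ℝ) • v) := by simpa using hF
      have h := hF'.comp_hasDerivAt (0 : ℝ) hc
      simpa [InnerProductSpace.toDual_apply_apply, Function.comp_def] using h
    have := hline.le_slope_of_hasDerivAt (Set.mem_univ (0 : ℝ)) (Set.mem_univ (1 : ℝ))
      zero_lt_one hderiv
    rw [slope_def_field] at this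
    simp only [sub_zero, div_one] at this
    have h1 : p + (1 : ℝ) • v = q := by rw [hv]; module
    have h0 : p + (0 : ℝ) • v = p := by module
    rw [h1, h0] at this
    linarith
  -- putting it together
  have hA : Hlam p₂ - H p₁ + ⟪gradHlam p₂, p₁ - p₂⟫ ≤ 0 := by
    have := hgradineq p₂ p₁
    have := hle p₁
    linarith
  have hB : H p₁ - Hlam p₂ + ⟪b, p₂ - p₁⟫ ≤ L ^ 2 * lam / 2 := by
    have := hb p₂
    have := hge p₂
    linarith
  have hM : 0 ≤ M := le_trans hm₁.1 hm₁.2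
  nlinarith [mul_nonneg hm₂.1 (neg_nonneg.mpr hA),
    mul_nonneg hm₁.1 (sub_nonneg.mpr hB),
    mul_nonneg (sub_nonneg.mpr hm₁.2) (by positivity : (0:ℝ) ≤ L ^ 2 * lam),
    mul_nonneg hM (by positivity : (0:ℝ) ≤ L ^ 2 * lam)]
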